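/- Let A be a Banach algebra and I, J closed two-sided ideals of A such that I has a bounded approximate identity. Then the sum I + J is a closed ideal of A. -/

import Mathlib

open Pointwise Filter

/-- A bounded approximate identity for a subset `I` of a normed ring: a bounded net
`(e_λ)` in `I` with `e_λ x → x` and `x e_λ → x` for every `x ∈ I`. -/
def BoundedApproxIdentity {A : Type*} [NonUnitalNormedRing A] (I : Set A) : Prop :=
  ∃ (ι : Type) (l : Filter ι) (e : ι → A), l.NeBot ∧ (∀ i, e i ∈ I) ∧
    (∃ C : ℝ, ∀ i, ‖e i‖ ≤ C) ∧
    ∀ x ∈ I, Filter.Tendsto (fun i => e i * x) l (nhds x) ∧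
      Filter.Tendsto (fun i => x * e i) l (nhds x)

/-- If `I` and `J` are closed two-sided ideals of a Banach algebra `A` and `I` has a
bounded approximate identity, then `I + J` is closed (hence a closed ideal). -/
theorem sum_closed_of_boundedApproxIdentity
    {A : Type*} [NonUnitalNormedRing A] [CompleteSpace A]
    (I J : TwoSidedIdeal A) (hI : IsClosed (I : Set A)) (hJ : IsClosed (J : Set A))
    (hbai : BoundedApproxIdentity (I : Set A)) :
    IsClosed ((I : Set A) + (J : Set A)) := by
  obtain ⟨ι, l, e, hne, heI, ⟨C0, hC0⟩, htend⟩ := hbai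
  set C : ℝ := max C0 0 with hCdef
  have hCe : ∀ i, ‖e i‖ ≤ C := fun i => (hC0 i).trans (le_max_left _ _)
  have hCnn : (0:ℝ) ≤ C := le_max_right _ _
  set S : Set A := (I : Set A) + (J : Set A) with hSdef
  -- S is closed under subtraction by elements of S
  have hSsub : ∀ u ∈ closure S, ∀ v ∈ S, u - v ∈ closure S := by
    intro u hu v hv
    obtain ⟨a', ha', b', hb', rfl⟩ := Set.mem_add.mp hv
    have hc : Continuous fun w : A => w - (a' + b') := continuous_id.sub continuous_const
    have hmaps : Set.MapsTo (fun w : A => w - (a' + b')) S S := by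
      rintro w hw
      obtain ⟨a, ha, b, hb, rfl⟩ := Set.mem_add.mp hw
      exact Set.mem_add.mpr ⟨a - a', I.sub_mem ha ha', b - b', J.sub_mem hb hb', by abel_nf⟩
    have := map_mem_closure hc hu hmaps
    simpa using this
  -- key approximation lemma
  have key : ∀ x ∈ closure S, ∀ ε : ℝ, 0 < ε →
      ∃ a b : A, a ∈ I ∧ b ∈ J ∧ ‖x - (a + b)‖ ≤ ε ∧ ‖a‖ ≤ C * ‖x‖ := by
    intro x hx ε hε
    have h2C : (0:ℝ) < 2 + C := by linarith
    have hδ : (0:ℝ) < ε / (2 + C) := div_pos hε h2C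
    obtain ⟨y, hyS, hy⟩ := Metric.mem_closure_iff.mp hx _ hδ
    obtain ⟨a', ha', b', hb', rfl⟩ := Set.mem_add.mp hyS
    have hxy : ‖x - (a' + b')‖ < ε / (2 + C) := by
      simpa [dist_eq_norm] using hy
    have hev : ∀ᶠ i in l, ‖e i * a' - a'‖ < ε / (2 + C) := by
      have ht := Metric.tendsto_nhds.mp (htend a' ha').1 _ hδ
      filter_upwards [ht] with i hi
      simpa [dist_eq_norm] using hi
    obtain ⟨i, hi⟩ := hev.exists
    refine ⟨e i * x, b' - e i * b', I.mul_mem_right _ _ (heI i),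
      J.sub_mem hb' (J.mul_mem_left _ _ hb'), ?_, ?_⟩
    · have heq : x - (e i * x + (b' - e i * b')) =
          (x - (a' + b')) - e i * (x - (a' + b')) + (a' - e i * a') := by
        noncomm_ring
      rw [heq]
      have h1 : ‖e i * (x - (a' + b'))‖ ≤ C * ‖x - (a' + b')‖ :=
        (norm_mul_le _ _).trans (mul_le_mul_of_nonneg_right (hCe i) (norm_nonneg _))
      have hi' : ‖a' - e i * a'‖ < ε / (2 + C) := by rwa [norm_sub_rev]
      calc ‖(x - (a' + b')) - e i * (x - (a' + b')) + (a' - e i * a')‖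
          ≤ ‖(x - (a' + b')) - e i * (x - (a' + b'))‖ + ‖a' - e i * a'‖ := norm_add_le _ _
        _ ≤ ‖x - (a' + b')‖ + ‖e i * (x - (a' + b'))‖ + ‖a' - e i * a'‖ := by
            have := norm_sub_le (x - (a' + b')) (e i * (x - (a' + b')))
            linarith
        _ ≤ ε / (2 + C) + C * (ε / (2 + C)) + ε / (2 + C) := by
            have h2 : C * ‖x - (a' + b')‖ ≤ C * (ε / (2 + C)) :=
              mul_le_mul_of_nonneg_left hxy.le hCnn
            linarith
        _ = ε := by field_simp; ring
    · exact (norm_mul_le _ _).trans (mul_le_mul_of_nonneg_right (hCe i) (norm_nonneg _))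
  -- choice function
  have key' : ∀ p : A × ℕ, ∃ a b : A, p.1 ∈ closure S →
      a ∈ I ∧ b ∈ J ∧ ‖p.1 - (a + b)‖ ≤ (1/2 : ℝ)^p.2 ∧ ‖a‖ ≤ C * ‖p.1‖ := by
    intro p
    by_cases h : p.1 ∈ closure S
    · obtain ⟨a, b, h1, h2, h3, h4⟩ := key p.1 h ((1/2 : ℝ)^p.2) (by positivity)
      exact ⟨a, b, fun _ => ⟨h1, h2, h3, h4⟩⟩
    · exact ⟨0, 0, fun h' => absurd h' h⟩
  choose f g hfg using key'
  refine isClosed_of_closure_subset ?_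
  intro x hx
  -- the iterative sequence
  let X : ℕ → A := fun n => Nat.rec x (fun n xn => xn - (f (xn, n) + g (xn, n))) n
  have hX0 : X 0 = x := rfl
  have hXsucc : ∀ n, X (n + 1) = X n - (f (X n, n) + g (X n, n)) := fun n => rfl
  set a : ℕ → A := fun n => f (X n, n) with hadef
  set b : ℕ → A := fun n => g (X n, n) with hbdef
  have hXcl : ∀ n, X n ∈ closure S := by
    intro n
    induction n with
    | zero => exact hx
    | succ n ih =>
      obtain ⟨h1, h2, _, _⟩ := hfg (X n, n) ih
      rw [hXsucc]
      exact hSsub _ ih _ (Set.mem_add.mpr ⟨_, h1, _, h2, rfl⟩)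
  have haI : ∀ n, a n ∈ I := fun n => (hfg (X n, n) (hXcl n)).1
  have hbJ : ∀ n, b n ∈ J := fun n => (hfg (X n, n) (hXcl n)).2.1
  have hXnorm : ∀ n, ‖X (n + 1)‖ ≤ (1/2 : ℝ)^n := by
    intro n
    have := (hfg (X n, n) (hXcl n)).2.2.1
    rw [hXsucc]
    exact this
  have hanorm : ∀ n, ‖a n‖ ≤ C * ‖X n‖ := fun n => (hfg (X n, n) (hXcl n)).2.2.2
  -- summability
  have hgeo : Summable (fun n : ℕ => (1/2 : ℝ)^n) :=
    summable_geometric_of_lt_one (by norm_num) (by norm_num)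
  have hXs : Summable (fun n => ‖X n‖) := by
    rw [← summable_nat_add_iff 1]
    exact Summable.of_nonneg_of_le (fun n => norm_nonneg _) hXnorm hgeo
  have hXsum : Summable X := Summable.of_norm hXs
  have hXshift : Summable (fun n => X (n + 1)) := (summable_nat_add_iff 1).mpr hXsum
  have haN : Summable (fun n => ‖a n‖) :=
    Summable.of_nonneg_of_le (fun n => norm_nonneg _) hanorm (hXs.mul_left C)
  have haS : Summable a := Summable.of_norm haN
  have hbeq : ∀ n, b n = (X n - X (n + 1)) - a n := by
    intro n
    rw [hXsucc]
    abel
  have hbS : Summable b := by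
    have : Summable (fun n => (X n - X (n + 1)) - a n) := (hXsum.sub hXshift).sub haS
    exact this.congr fun n => (hbeq n).symm
  -- X n → 0
  have hXto0 : Filter.Tendsto X atTop (nhds 0) := by
    rw [tendsto_zero_iff_norm_tendsto_zero]
    exact hXs.tendsto_atTop_zero
  -- partial sums
  have hpart : ∀ n, ∑ k ∈ Finset.range n, (a k + b k) = x - X n := by
    intro n
    induction n with
    | zero => simp [hX0]
    | succ n ih =>
      rw [Finset.sum_range_succ, ih, hXsucc]
      abel
  have habS : Summable (fun n => a n + b n) := haS.add hbS
  have ht1 : Filter.Tendsto (fun n => ∑ k ∈ Finset.range n, (a k + b k)) atTop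
      (nhds (∑' n, (a n + b n))) := habS.hasSum.tendsto_sum_nat
  have ht2 : Filter.Tendsto (fun n => ∑ k ∈ Finset.range n, (a k + b k)) atTop (nhds x) := by
    have : Filter.Tendsto (fun n => x - X n) atTop (nhds (x - 0)) :=
      tendsto_const_nhds.sub hXto0
    rw [sub_zero] at this
    exact this.congr fun n => (hpart n).symm
  have hxeq : x = ∑' n, (a n + b n) := tendsto_nhds_unique ht2 ht1
  have hxsplit : x = (∑' n, a n) + ∑' n, b n := by
    rw [hxeq, Summable.tsum_add haS hbS]
  -- limits stay in the closed ideals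
  have htsumI : (∑' n, a n) ∈ (I : Set A) := by
    refine hI.mem_of_tendsto haS.hasSum.tendsto_sum_nat (Filter.Eventually.of_forall fun n => ?_)
    exact sum_mem fun k _ => haI k
  have htsumJ : (∑' n, b n) ∈ (J : Set A) := by
    refine hJ.mem_of_tendsto hbS.hasSum.tendsto_sum_nat (Filter.Eventually.of_forall fun n => ?_)
    exact sum_mem fun k _ => hbJ k
  rw [hxsplit]
  exact Set.add_mem_add htsumI htsumJ
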